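/- The set of all differences {d₁ − d₂ : d₁ ∈ Col₁, d₂ ∈ Col₂} equals Diff₂. -/
import Mathlib


/-- `Col₁ = {(-s, -s, q - b·s - (n-r)) : 0 ≤ s ≤ r, 0 ≤ q ≤ n-r}`, recording coefficients of
`D_t, D_y, D_v` in the Picard group. -/
def Col1 (n r b : ℤ) : Set (ℤ × ℤ × ℤ) :=
  {p | ∃ s q : ℤ, 0 ≤ s ∧ s ≤ r ∧ 0 ≤ q ∧ q ≤ n - r ∧
    p = (-s, -s, q - b * s - (n - r))}

/-- `Col₂ = {(-s, -(s-1), q - b·s - (n-r)) : 1 ≤ s ≤ r, 0 ≤ q ≤ n-r-1}`. -/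
def Col2 (n r b : ℤ) : Set (ℤ × ℤ × ℤ) :=
  {p | ∃ s q : ℤ, 1 ≤ s ∧ s ≤ r ∧ 0 ≤ q ∧ q ≤ n - r - 1 ∧
    p = (-s, -(s - 1), q - b * s - (n - r))}

/-- `Col = Col₁ ∪ Col₂`. -/
def Col (n r b : ℤ) : Set (ℤ × ℤ × ℤ) := Col1 n r b ∪ Col2 n r b

/-- `Diff₁ = {(s, s, b·s + q) : -r ≤ s ≤ r, r-n ≤ q ≤ n-r}`. -/
def Diff1 (n r b : ℤ) : Set (ℤ × ℤ × ℤ) :=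
  {p | ∃ s q : ℤ, -r ≤ s ∧ s ≤ r ∧ r - n ≤ q ∧ q ≤ n - r ∧
    p = (s, s, b * s + q)}

/-- `Diff₂ = {(s, s-1, b·s + q) : 1-r ≤ s ≤ r, r-n+1 ≤ q ≤ n-r}`. -/
def Diff2 (n r b : ℤ) : Set (ℤ × ℤ × ℤ) :=
  {p | ∃ s q : ℤ, 1 - r ≤ s ∧ s ≤ r ∧ r - n + 1 ≤ q ∧ q ≤ n - r ∧
    p = (s, s - 1, b * s + q)}

/-- `Diff₃ = {(s, s+1, b·s + q) : -r ≤ s ≤ r-1, r-n ≤ q ≤ n-r-1}`. -/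
def Diff3 (n r b : ℤ) : Set (ℤ × ℤ × ℤ) :=
  {p | ∃ s q : ℤ, -r ≤ s ∧ s ≤ r - 1 ∧ r - n ≤ q ∧ q ≤ n - r - 1 ∧
    p = (s, s + 1, b * s + q)}

/-- The set of all differences `{d₁ - d₂ : d₁ ∈ Col₁, d₂ ∈ Col₂}`
equals `Diff₂`. -/
theorem diff_col1_col2 (n r b : ℤ) (hr : 1 ≤ r) (hrn : r ≤ n - 1) (hb : 0 ≤ b) :
    {p | ∃ d₁ ∈ Col1 n r b, ∃ d₂ ∈ Col2 n r b, p = d₁ - d₂} = Diff2 n r b := by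
  ext p
  constructor
  · rintro ⟨d₁, ⟨s₁, q₁, hs₁0, hs₁r, hq₁0, hq₁, rfl⟩, d₂, ⟨s₂, q₂, hs₂1, hs₂r, hq₂0, hq₂, rfl⟩, rfl⟩
    refine ⟨s₂ - s₁, q₁ - q₂, by omega, by omega, by omega, by omega, ?_⟩
    simp only [Prod.mk_sub_mk, Prod.mk.injEq]
    refine ⟨by ring, by ring, by ring⟩
  · rintro ⟨s, q, hs1, hsr, hq1, hq, rfl⟩
    refine ⟨(-(max (1 - s) 0), -(max (1 - s) 0), max q 0 - b * max (1 - s) 0 - (n - r)),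
      ⟨max (1 - s) 0, max q 0, by omega, by omega, by omega, by omega, rfl⟩,
      (-(max (1 - s) 0 + s), -((max (1 - s) 0 + s) - 1),
        (max q 0 - q) - b * (max (1 - s) 0 + s) - (n - r)),
      ⟨max (1 - s) 0 + s, max q 0 - q, by omega, by omega, by omega, by omega, rfl⟩, ?_⟩
    simp only [Prod.mk_sub_mk, Prod.mk.injEq]
    refine ⟨by ring, by ring, by ring⟩
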